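/- For a positive integer n, the function h(s) = −(s^{2n} + s)/(s^{2n+1} + 1) is strictly increasing on (1, ∞); equivalently, s ↦ (s^{2n} + s)/(s^{2n+1} + 1) is strictly decreasing on (1, ∞). -/

import Mathlib

/-- For a positive integer `n`, the function `h(s) = -((s^(2n) + s) / (s^(2n+1) + 1))`
is strictly increasing on `(1, ∞)`. -/
theorem h_strictMonoOn (n : ℕ) (hn : 0 < n) :
    StrictMonoOn (fun s : ℝ => -((s ^ (2 * n) + s) / (s ^ (2 * n + 1) + 1)))
      (Set.Ioi 1) := by
  have hderiv : ∀ x : ℝ, 1 < x →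
      HasDerivAt (fun s : ℝ => -((s ^ (2 * n) + s) / (s ^ (2 * n + 1) + 1)))
        (-((((2 * n : ℕ) : ℝ) * x ^ (2 * n - 1) + 1) * (x ^ (2 * n + 1) + 1) -
            (x ^ (2 * n) + x) * (((2 * n + 1 : ℕ) : ℝ) * x ^ (2 * n + 1 - 1))) /
          (x ^ (2 * n + 1) + 1) ^ 2) x := by
    intro x hx
    have hv : x ^ (2 * n + 1) + 1 ≠ 0 := by positivity
    have hu : HasDerivAt (fun s : ℝ => s ^ (2 * n) + s)
        (((2 * n : ℕ) : ℝ) * x ^ (2 * n - 1) + 1) x :=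
      (hasDerivAt_pow (2 * n) x).add (hasDerivAt_id x)
    have hvd : HasDerivAt (fun s : ℝ => s ^ (2 * n + 1) + 1)
        (((2 * n + 1 : ℕ) : ℝ) * x ^ (2 * n + 1 - 1)) x :=
      (hasDerivAt_pow (2 * n + 1) x).add_const 1
    have := (hu.div hvd hv).neg
    refine this.congr_deriv ?_
    ring
  apply strictMonoOn_of_deriv_pos (convex_Ioi 1)
  · exact fun x hx => ((hderiv x hx).continuousAt).continuousWithinAt
  · intro x hx
    rw [interior_Ioi] at hx
    have hx' : (1 : ℝ) < x := hx
    rw [(hderiv x hx').deriv]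
    have hv : (0 : ℝ) < x ^ (2 * n + 1) + 1 := by positivity
    apply div_pos _ (by positivity)
    set a : ℝ := x ^ (2 * n - 1) with ha
    have h1 : x ^ (2 * n) = a * x := by
      rw [ha, ← pow_succ]
      congr 1
      omega
    have h2 : x ^ (2 * n + 1) = a * x ^ 2 := by
      rw [ha, ← pow_add]
      congr 1
      omega
    have h3 : 2 * n + 1 - 1 = 2 * n := by omega
    have ha1 : 1 < a := by
      rw [ha]
      exact one_lt_pow₀ hx' (by omega)
    have hn' : (1 : ℝ) ≤ (n : ℝ) := by exact_mod_cast hn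
    rw [h3, h1, h2]
    push_cast
    nlinarith [mul_pos (show (0:ℝ) < a * x - 1 by nlinarith) (show (0:ℝ) < a * x + 1 by nlinarith),
      mul_pos (show (0:ℝ) < a by linarith) (show (0:ℝ) < x ^ 2 - 1 by nlinarith),
      sq_nonneg (a * x)]
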